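/- arXiv:1505.07174 — 9 statements merged into one kernel-verified Lean document; each statement's English description precedes it below -/
import Mathlib

section
/- Suppose the initial history functions are positive (N̂, P̂, Ẑ are all strictly positive on [−T,0]) and the conservation law holds at all times where the solution exists. Then the solution (N̂, P̂, Ẑ) of the fixed-delay DDE model on its maximal interval [0, ŵ) satisfies 0 < N̂(t̂) < N_T, 0 < P̂(t̂) < N_T, and 0 < Ẑ(t̂) < N_T for all t̂ ∈ [0, ŵ). -/
open Real Set Filter Topology

lemma my_mono {f : ℝ → ℝ} (hf : ContDiff ℝ 1 f) (hf' : ∀ x ≥ (0:ℝ), 0 < deriv f x) :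
    MonotoneOn f (Ici 0) := by
  apply monotoneOn_of_deriv_nonneg (convex_Ici 0) hf.continuous.continuousOn
  · exact fun x _ => (hf.differentiable one_ne_zero x).differentiableWithinAt
  · intro x hx
    rw [interior_Ici] at hx
    exact (hf' x hx.le).le

lemma my_lin_bound {f : ℝ → ℝ} (hf : ContDiff ℝ 1 f) (hf0 : f 0 = 0) {M L : ℝ}
    (hL : ∀ x ∈ Icc (0:ℝ) M, deriv f x ≤ L) :
    ∀ N ∈ Icc (0:ℝ) M, f N ≤ L * N := by
  intro N hN
  rcases eq_or_lt_of_le hN.1 with h0 | h0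
  · simp [← h0, hf0]
  · obtain ⟨c, hc, hceq⟩ := exists_hasDerivAt_eq_slope f (deriv f) h0
      hf.continuous.continuousOn
      (fun x _ => (hf.differentiable one_ne_zero x).hasDerivAt)
    have hc' : deriv f c ≤ L := hL c ⟨hc.1.le, hc.2.le.trans hN.2⟩
    rw [hf0, sub_zero, sub_zero] at hceq
    have hfN : f N = deriv f c * N := by
      rw [hceq]; field_simp
    rw [hfN]
    exact mul_le_mul_of_nonneg_right hc' h0.le

lemma my_gronwall {x x' : ℝ → ℝ} {K b : ℝ} (hb : 0 ≤ b)
    (hd : ∀ t ∈ Icc (0:ℝ) b, HasDerivAt x (x' t) t)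
    (hge : ∀ t ∈ Icc (0:ℝ) b, -(K * x t) ≤ x' t)
    (h0 : 0 < x 0) : 0 < x b := by
  have hy : ∀ t ∈ Icc (0:ℝ) b,
      HasDerivAt (fun t => x t * Real.exp (K * t))
        (x' t * Real.exp (K * t) + x t * (Real.exp (K * t) * K)) t := by
    intro t ht
    have he : HasDerivAt (fun t : ℝ => Real.exp (K * t)) (Real.exp (K * t) * K) t := by
      simpa using (((hasDerivAt_id t).const_mul K).exp)
    exact (hd t ht).mul he
  have hmono : MonotoneOn (fun t => x t * Real.exp (K * t)) (Icc 0 b) := by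
    apply monotoneOn_of_deriv_nonneg (convex_Icc 0 b)
    · exact fun t ht => ((hy t ht).continuousAt).continuousWithinAt
    · intro t ht
      rw [interior_Icc] at ht
      exact ((hy t (Ioo_subset_Icc_self ht)).differentiableAt).differentiableWithinAt
    · intro t ht
      rw [interior_Icc] at ht
      have ht' := Ioo_subset_Icc_self ht
      rw [(hy t ht').deriv]
      have h1 := hge t ht'
      nlinarith [Real.exp_pos (K * t)]
  have h2 := hmono (left_mem_Icc.mpr hb) (right_mem_Icc.mpr hb) hb
  simp only [mul_zero, Real.exp_zero, mul_one] at h2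
  nlinarith [Real.exp_pos (K * b)]

lemma my_int_nonneg {R h Zh Ph : ℝ → ℝ} {τh : ℝ → ℝ → ℝ} {γ g δ0 m Rstar T : ℝ} (t : ℝ)
    (hγ : 0 < γ) (hg : 0 < g) (hm : 0 ≤ m) (hRstar : 0 < Rstar) (hT : T = m / Rstar)
    (hpt : ∀ u : ℝ, t - T ≤ u → u ≤ t → 0 ≤ Zh u ∧ 0 ≤ h (Ph u) ∧ 0 < R (Ph u)) :
    0 ≤ ∫ s in (0:ℝ)..m, Real.exp (-δ0 * τh s t) * γ * g * Zh (t - s / Rstar) *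
      h (Ph (t - s / Rstar)) / R (Ph (t - s / Rstar)) := by
  apply intervalIntegral.integral_nonneg hm
  intro s hs
  have h1 : t - T ≤ t - s / Rstar := by
    have : s / Rstar ≤ T := by
      rw [hT]; gcongr; exact hs.2
    linarith
  have h2 : t - s / Rstar ≤ t := by
    have : 0 ≤ s / Rstar := div_nonneg hs.1 hRstar.le
    linarith
  obtain ⟨hZ, hhh, hRp⟩ := hpt _ h1 h2
  apply div_nonneg _ hRp.le
  have := (Real.exp_pos (-δ0 * τh s t)).le
  positivity

set_option maxHeartbeats 2000000 in
/-- Positivity and boundedness of solutions of the fixed-delay DDE form of the closed NPZ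
model: if the initial history functions are positive on `[−T, 0]` and the conservation law
holds on `[0, ŵ)`, then `N̂, P̂, Ẑ ∈ (0, N_T)` on the maximal interval `[0, ŵ)`
(where `0 < ŵ ≤ ∞` is encoded as an extended real number). -/
theorem stmt_0
    (f h R : ℝ → ℝ) (μ lam g δ δ0 γ m NT Rstar Rinf T : ℝ)
    (hf : ContDiff ℝ 1 f) (hh : ContDiff ℝ 1 h) (hR : ContDiff ℝ 1 R)
    (hf0 : f 0 = 0) (hf' : ∀ N ≥ (0 : ℝ), 0 < deriv f N) (hftop : Tendsto f atTop (𝓝 1))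
    (hh0 : h 0 = 0) (hh' : ∀ P ≥ (0 : ℝ), 0 < deriv h P) (hhtop : Tendsto h atTop (𝓝 1))
    (hRnn : ∀ P ≥ (0 : ℝ), 0 ≤ R P) (hR' : ∀ P ≥ (0 : ℝ), 0 ≤ deriv R P)
    (hRpos : ∀ P > (0 : ℝ), 0 < R P) (hRtop : Tendsto R atTop (𝓝 Rinf))
    (hμ : 0 < μ) (hlam : 0 < lam) (hg : 0 < g) (hδ : 0 < δ) (hδ0 : 0 ≤ δ0)
    (hγ : γ ∈ Ioc (0 : ℝ) 1) (hμlam : lam < μ) (hγg : δ < γ * g)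
    (hm : 0 < m) (hNT : 0 < NT) (hRstar : 0 < Rstar) (hT : T = m / Rstar)
    (w : EReal) (hw : 0 < w)
    (Nh Ph Zh : ℝ → ℝ) (τh : ℝ → ℝ → ℝ)
    (hτh : ∀ s t : ℝ, τh s t = ∫ r in (t - s / Rstar)..t, Rstar / R (Ph r))
    (hNcont : ContinuousOn Nh {t : ℝ | -T ≤ t ∧ (t : EReal) < w})
    (hPcont : ContinuousOn Ph {t : ℝ | -T ≤ t ∧ (t : EReal) < w})
    (hZcont : ContinuousOn Zh {t : ℝ | -T ≤ t ∧ (t : EReal) < w})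
    (hRPpos : ∀ t : ℝ, -T ≤ t → (t : EReal) < w → 0 < R (Ph t))
    (hNeq : ∀ t : ℝ, 0 ≤ t → (t : EReal) < w →
      HasDerivAt Nh ((Rstar / R (Ph t)) *
        (-μ * Ph t * f (Nh t) + lam * Ph t + δ * Zh t + (1 - γ) * g * Zh t * h (Ph t)
          + δ0 * (NT - Nh t - Ph t - Zh t))) t)
    (hPeq : ∀ t : ℝ, 0 ≤ t → (t : EReal) < w →
      HasDerivAt Ph ((Rstar / R (Ph t)) *
        (μ * Ph t * f (Nh t) - lam * Ph t - g * Zh t * h (Ph t))) t)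
    (hZeq : ∀ t : ℝ, 0 ≤ t → (t : EReal) < w →
      HasDerivAt Zh (γ * g * Real.exp (-δ0 * τh m t) * (Rstar / R (Ph (t - T))) *
        Zh (t - T) * h (Ph (t - T)) - (Rstar / R (Ph t)) * δ * Zh t) t)
    (hhist : ∀ t : ℝ, -T ≤ t → t ≤ 0 → 0 < Nh t ∧ 0 < Ph t ∧ 0 < Zh t)
    (hcons : ∀ t : ℝ, 0 ≤ t → (t : EReal) < w →
      NT = Nh t + Ph t + Zh t +
        ∫ s in (0 : ℝ)..m, Real.exp (-δ0 * τh s t) * γ * g * Zh (t - s / Rstar) *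
          h (Ph (t - s / Rstar)) / R (Ph (t - s / Rstar))) :
    ∀ t : ℝ, 0 ≤ t → (t : EReal) < w →
      Nh t ∈ Ioo 0 NT ∧ Ph t ∈ Ioo 0 NT ∧ Zh t ∈ Ioo 0 NT := by
  have hT0 : 0 < T := by rw [hT]; positivity
  set D : Set ℝ := {t : ℝ | -T ≤ t ∧ (t : EReal) < w} with hD
  have hfm : MonotoneOn f (Ici 0) := my_mono hf hf'
  have hhm : MonotoneOn h (Ici 0) := my_mono hh hh'
  have hfnn : ∀ x : ℝ, 0 ≤ x → 0 ≤ f x := by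
    intro x hx
    have := hfm (mem_Ici.mpr le_rfl) (mem_Ici.mpr hx) hx
    rwa [hf0] at this
  have hhnn : ∀ x : ℝ, 0 ≤ x → 0 ≤ h x := by
    intro x hx
    have := hhm (mem_Ici.mpr le_rfl) (mem_Ici.mpr hx) hx
    rwa [hh0] at this
  have habs : ∀ {y C : ℝ}, ‖y‖ ≤ C → y ≤ C := by
    intro y C hy
    rw [Real.norm_eq_abs] at hy
    exact le_trans (le_abs_self _) hy
  -- main positivity claim
  have key : ∀ t : ℝ, 0 ≤ t → (t : EReal) < w → 0 < Nh t ∧ 0 < Ph t ∧ 0 < Zh t := by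
    by_contra hcon
    push_neg at hcon
    obtain ⟨tb, htb0, htbw, htbbad⟩ := hcon
    set B : Set ℝ := {t : ℝ | 0 ≤ t ∧ (t : EReal) < w ∧ (Nh t ≤ 0 ∨ Ph t ≤ 0 ∨ Zh t ≤ 0)}
      with hBdef
    have htbB : tb ∈ B := by
      refine ⟨htb0, htbw, ?_⟩
      rcases le_or_gt (Nh tb) 0 with hc | hc
      · exact Or.inl hc
      rcases le_or_gt (Ph tb) 0 with hc2 | hc2
      · exact Or.inr (Or.inl hc2)
      exact Or.inr (Or.inr (htbbad hc hc2))
    have hBne : B.Nonempty := ⟨tb, htbB⟩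
    have hBbd : BddBelow B := ⟨0, fun x hx => hx.1⟩
    set t0 := sInf B with ht0def
    have ht00 : 0 ≤ t0 := le_csInf hBne fun x hx => hx.1
    have ht0tb : t0 ≤ tb := csInf_le hBbd htbB
    have ht0w : (t0 : EReal) < w := lt_of_le_of_lt (EReal.coe_le_coe_iff.mpr ht0tb) htbw
    have hIsub : Icc (0:ℝ) t0 ⊆ D := by
      intro t ht
      exact ⟨by linarith [ht.1], lt_of_le_of_lt (EReal.coe_le_coe_iff.mpr ht.2) ht0w⟩
    have ht0D : t0 ∈ D := hIsub (right_mem_Icc.mpr ht00)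
    have hpre : ∀ u : ℝ, -T ≤ u → u < t0 → 0 < Nh u ∧ 0 < Ph u ∧ 0 < Zh u := by
      intro u hu1 hu2
      rcases le_or_gt u 0 with hu0 | hu0
      · exact hhist u hu1 hu0
      · have huw : (u : EReal) < w :=
          lt_of_le_of_lt (EReal.coe_le_coe_iff.mpr (le_of_lt (lt_of_lt_of_le hu2 ht0tb))) htbw
        by_contra hcc
        have huB : u ∈ B := by
          refine ⟨hu0.le, huw, ?_⟩
          rcases le_or_gt (Nh u) 0 with hc | hc
          · exact Or.inl hc
          rcases le_or_gt (Ph u) 0 with hc2 | hc2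
          · exact Or.inr (Or.inl hc2)
          rcases le_or_gt (Zh u) 0 with hc3 | hc3
          · exact Or.inr (Or.inr hc3)
          exact absurd ⟨hc, hc2, hc3⟩ hcc
        exact absurd (csInf_le hBbd huB) (not_le.mpr hu2)
    have hat0 : 0 ≤ Nh t0 ∧ 0 ≤ Ph t0 ∧ 0 ≤ Zh t0 := by
      rcases eq_or_lt_of_le ht00 with h0 | h0
      · obtain ⟨a, b, c⟩ := hhist t0 (by linarith) (le_of_eq h0.symm)
        exact ⟨a.le, b.le, c.le⟩
      · have hne : (𝓝[Ioo (0:ℝ) t0] t0).NeBot := by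
          rw [← mem_closure_iff_nhdsWithin_neBot, closure_Ioo (ne_of_lt h0)]
          exact ⟨h0.le, le_rfl⟩
        have hsub2 : Ioo (0:ℝ) t0 ⊆ D := fun v hv => hIsub ⟨hv.1.le, hv.2.le⟩
        have hget : ∀ x : ℝ → ℝ, ContinuousOn x D →
            (∀ v : ℝ, -T ≤ v → v < t0 → 0 < x v) → 0 ≤ x t0 := by
          intro x hx hxpos
          have htend : Tendsto x (𝓝[Ioo (0:ℝ) t0] t0) (𝓝 (x t0)) :=
            (hx t0 ht0D).mono_left (nhdsWithin_mono _ hsub2)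
          exact ge_of_tendsto htend (eventually_of_mem self_mem_nhdsWithin
            fun v hv => (hxpos v (by linarith [hv.1]) hv.2).le)
        exact ⟨hget Nh hNcont (fun v a b => (hpre v a b).1),
               hget Ph hPcont (fun v a b => (hpre v a b).2.1),
               hget Zh hZcont (fun v a b => (hpre v a b).2.2)⟩
    have Hge : ∀ u : ℝ, -T ≤ u → u ≤ t0 → 0 ≤ Nh u ∧ 0 ≤ Ph u ∧ 0 ≤ Zh u := by
      intro u hu1 hu2
      rcases eq_or_lt_of_le hu2 with he | hl
      · rw [he]; exact hat0
      · obtain ⟨a, b, c⟩ := hpre u hu1 hl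
        exact ⟨a.le, b.le, c.le⟩
    -- compactness bounds
    have hcN : ContinuousOn Nh (Icc 0 t0) := hNcont.mono hIsub
    have hcP : ContinuousOn Ph (Icc 0 t0) := hPcont.mono hIsub
    have hcZ : ContinuousOn Zh (Icc 0 t0) := hZcont.mono hIsub
    have hRcont : ContinuousOn (fun t => R (Ph t)) (Icc 0 t0) :=
      hR.continuous.comp_continuousOn hcP
    obtain ⟨tr, htr, hmin⟩ := isCompact_Icc.exists_isMinOn (nonempty_Icc.mpr ht00) hRcont
    have hr0 : 0 < R (Ph tr) := hRPpos tr (hIsub htr).1 (hIsub htr).2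
    set r := R (Ph tr) with hrdef
    have hrle : ∀ t ∈ Icc (0:ℝ) t0, r ≤ R (Ph t) := fun t ht => isMinOn_iff.mp hmin t ht
    obtain ⟨MN, hMN⟩ := isCompact_Icc.exists_bound_of_continuousOn hcN
    obtain ⟨MP, hMP⟩ := isCompact_Icc.exists_bound_of_continuousOn hcP
    obtain ⟨MZ, hMZ⟩ := isCompact_Icc.exists_bound_of_continuousOn hcZ
    have hmem0 : (0:ℝ) ∈ Icc (0:ℝ) t0 := left_mem_Icc.mpr ht00
    have hMN0 : 0 ≤ MN := le_trans (norm_nonneg _) (hMN 0 hmem0)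
    have hMP0 : 0 ≤ MP := le_trans (norm_nonneg _) (hMP 0 hmem0)
    have hMZ0 : 0 ≤ MZ := le_trans (norm_nonneg _) (hMZ 0 hmem0)
    obtain ⟨Lf, hLf⟩ := (isCompact_Icc (a := (0:ℝ)) (b := MN)).exists_bound_of_continuousOn
      ((hf.continuous_deriv le_rfl).continuousOn)
    obtain ⟨Lh, hLh⟩ := (isCompact_Icc (a := (0:ℝ)) (b := MP)).exists_bound_of_continuousOn
      ((hh.continuous_deriv le_rfl).continuousOn)
    have hLf0 : 0 ≤ Lf := le_trans (norm_nonneg _) (hLf 0 (left_mem_Icc.mpr hMN0))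
    have hLh0 : 0 ≤ Lh := le_trans (norm_nonneg _) (hLh 0 (left_mem_Icc.mpr hMP0))
    have hfb : ∀ x ∈ Icc (0:ℝ) MN, f x ≤ Lf * x :=
      my_lin_bound hf hf0 (fun x hx => habs (hLf x hx))
    have hhb : ∀ x ∈ Icc (0:ℝ) MP, h x ≤ Lh * x :=
      my_lin_bound hh hh0 (fun x hx => habs (hLh x hx))
    -- conservation nonnegativity up to t0
    have hconsge : ∀ t ∈ Icc (0:ℝ) t0, 0 ≤ NT - Nh t - Ph t - Zh t := by
      intro t ht
      have htw : (t : EReal) < w := (hIsub ht).2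
      have hint : 0 ≤ ∫ s in (0:ℝ)..m, Real.exp (-δ0 * τh s t) * γ * g * Zh (t - s / Rstar) *
          h (Ph (t - s / Rstar)) / R (Ph (t - s / Rstar)) := by
        apply my_int_nonneg t hγ.1 hg hm.le hRstar hT
        intro u hu1 hu2
        have hu1' : -T ≤ u := by linarith [ht.1]
        have hu2' : u ≤ t0 := le_trans hu2 ht.2
        obtain ⟨_, hPu, hZu⟩ := Hge u hu1' hu2'
        exact ⟨hZu, hhnn _ hPu,
          hRPpos u hu1' (lt_of_le_of_lt (EReal.coe_le_coe_iff.mpr hu2') ht0w)⟩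
      have := hcons t ht.1 htw
      linarith
    -- common facts for Gronwall
    have hfacts : ∀ t ∈ Icc (0:ℝ) t0,
        0 < R (Ph t) ∧ Rstar / R (Ph t) ≤ Rstar / r ∧ 0 < Rstar / R (Ph t) := by
      intro t ht
      have hq0 : 0 < R (Ph t) := hRPpos t (hIsub ht).1 (hIsub ht).2
      exact ⟨hq0, div_le_div_of_nonneg_left hRstar.le hr0 (hrle t ht), div_pos hRstar hq0⟩
    have hP00 : 0 < Ph 0 := (hhist 0 (by linarith) le_rfl).2.1
    have hN00 : 0 < Nh 0 := (hhist 0 (by linarith) le_rfl).1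
    have hZ00 : 0 < Zh 0 := (hhist 0 (by linarith) le_rfl).2.2
    -- Gronwall for P
    have hPpos : 0 < Ph t0 := by
      refine my_gronwall (x' := fun t => (Rstar / R (Ph t)) *
        (μ * Ph t * f (Nh t) - lam * Ph t - g * Zh t * h (Ph t)))
        (K := Rstar * (lam + g * MZ * Lh) / r) ht00
        (fun t ht => hPeq t ht.1 (hIsub ht).2) ?_ hP00
      intro t ht
      obtain ⟨hq0, hq, hqpos⟩ := hfacts t ht
      obtain ⟨hN0, hP0, hZ0⟩ := Hge t (hIsub ht).1 ht.2
      have hPM : Ph t ≤ MP := habs (hMP t ht)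
      have hZM : Zh t ≤ MZ := habs (hMZ t ht)
      have hfN : 0 ≤ f (Nh t) := hfnn _ hN0
      have hhP0 : 0 ≤ h (Ph t) := hhnn _ hP0
      have hhP : h (Ph t) ≤ Lh * Ph t := hhb (Ph t) ⟨hP0, hPM⟩
      have hinner : -((lam + g * MZ * Lh) * Ph t) ≤
          μ * Ph t * f (Nh t) - lam * Ph t - g * Zh t * h (Ph t) := by
        have h1 : Zh t * h (Ph t) ≤ MZ * (Lh * Ph t) :=
          mul_le_mul hZM hhP hhP0 hMZ0
        nlinarith [mul_nonneg (mul_nonneg hμ.le hP0) hfN]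
      calc -(Rstar * (lam + g * MZ * Lh) / r * Ph t)
          = -((Rstar / r) * ((lam + g * MZ * Lh) * Ph t)) := by ring
        _ ≤ -((Rstar / R (Ph t)) * ((lam + g * MZ * Lh) * Ph t)) := by
            apply neg_le_neg
            apply mul_le_mul_of_nonneg_right hq
            have : 0 ≤ lam + g * MZ * Lh := by positivity
            positivity
        _ = (Rstar / R (Ph t)) * (-((lam + g * MZ * Lh) * Ph t)) := by ring
        _ ≤ (Rstar / R (Ph t)) * (μ * Ph t * f (Nh t) - lam * Ph t - g * Zh t * h (Ph t)) :=
            mul_le_mul_of_nonneg_left hinner hqpos.le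
    -- Gronwall for Z
    have hZpos : 0 < Zh t0 := by
      refine my_gronwall (x' := fun t => γ * g * Real.exp (-δ0 * τh m t) *
        (Rstar / R (Ph (t - T))) * Zh (t - T) * h (Ph (t - T)) -
        (Rstar / R (Ph t)) * δ * Zh t)
        (K := Rstar * δ / r) ht00
        (fun t ht => hZeq t ht.1 (hIsub ht).2) ?_ hZ00
      intro t ht
      obtain ⟨hq0, hq, hqpos⟩ := hfacts t ht
      obtain ⟨_, _, hZ0⟩ := Hge t (hIsub ht).1 ht.2
      have htT1 : -T ≤ t - T := by linarith [ht.1]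
      have htT2 : t - T ≤ t0 := by linarith [ht.2]
      obtain ⟨_, hPu, hZu⟩ := Hge (t - T) htT1 htT2
      have hRu : 0 < R (Ph (t - T)) :=
        hRPpos _ htT1 (lt_of_le_of_lt (EReal.coe_le_coe_iff.mpr htT2) ht0w)
      have hterm : 0 ≤ γ * g * Real.exp (-δ0 * τh m t) *
          (Rstar / R (Ph (t - T))) * Zh (t - T) * h (Ph (t - T)) := by
        have h1 : 0 ≤ h (Ph (t - T)) := hhnn _ hPu
        have h2 := (Real.exp_pos (-δ0 * τh m t)).le
        have h3 : (0:ℝ) < γ := hγ.1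
        positivity
      have h4 : (Rstar / R (Ph t)) * δ * Zh t ≤ (Rstar / r) * δ * Zh t := by
        apply mul_le_mul_of_nonneg_right _ hZ0
        exact mul_le_mul_of_nonneg_right hq hδ.le
      have h5 : Rstar * δ / r * Zh t = Rstar / r * δ * Zh t := by ring
      linarith
    -- Gronwall for N
    have hNpos : 0 < Nh t0 := by
      refine my_gronwall (x' := fun t => (Rstar / R (Ph t)) *
        (-μ * Ph t * f (Nh t) + lam * Ph t + δ * Zh t + (1 - γ) * g * Zh t * h (Ph t)
          + δ0 * (NT - Nh t - Ph t - Zh t)))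
        (K := Rstar * (μ * MP * Lf) / r) ht00
        (fun t ht => hNeq t ht.1 (hIsub ht).2) ?_ hN00
      intro t ht
      obtain ⟨hq0, hq, hqpos⟩ := hfacts t ht
      obtain ⟨hN0, hP0, hZ0⟩ := Hge t (hIsub ht).1 ht.2
      have hNM : Nh t ≤ MN := habs (hMN t ht)
      have hPM : Ph t ≤ MP := habs (hMP t ht)
      have hfN : 0 ≤ f (Nh t) := hfnn _ hN0
      have hhP0 : 0 ≤ h (Ph t) := hhnn _ hP0
      have hfNb : f (Nh t) ≤ Lf * Nh t := hfb (Nh t) ⟨hN0, hNM⟩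
      have hcons_t : 0 ≤ NT - Nh t - Ph t - Zh t := hconsge t ht
      have hγ1 : γ ≤ 1 := hγ.2
      have hinner : -(μ * MP * Lf * Nh t) ≤
          -μ * Ph t * f (Nh t) + lam * Ph t + δ * Zh t + (1 - γ) * g * Zh t * h (Ph t)
            + δ0 * (NT - Nh t - Ph t - Zh t) := by
        have h1 : μ * Ph t * f (Nh t) ≤ μ * MP * (Lf * Nh t) := by
          apply mul_le_mul _ hfNb hfN _
          · exact mul_le_mul_of_nonneg_left hPM hμ.le
          · positivity
        have h2 : 0 ≤ (1 - γ) * g * Zh t * h (Ph t) := by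
          have : (0:ℝ) ≤ 1 - γ := by linarith
          positivity
        have h3 : 0 ≤ δ0 * (NT - Nh t - Ph t - Zh t) := mul_nonneg hδ0 hcons_t
        nlinarith
      calc -(Rstar * (μ * MP * Lf) / r * Nh t)
          = -((Rstar / r) * (μ * MP * Lf * Nh t)) := by ring
        _ ≤ -((Rstar / R (Ph t)) * (μ * MP * Lf * Nh t)) := by
            apply neg_le_neg
            apply mul_le_mul_of_nonneg_right hq
            positivity
        _ = (Rstar / R (Ph t)) * (-(μ * MP * Lf * Nh t)) := by ring
        _ ≤ (Rstar / R (Ph t)) * (-μ * Ph t * f (Nh t) + lam * Ph t + δ * Zh t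
              + (1 - γ) * g * Zh t * h (Ph t) + δ0 * (NT - Nh t - Ph t - Zh t)) :=
            mul_le_mul_of_nonneg_left hinner hqpos.le
    -- derive contradiction with minimality of t0
    have hevN : ∀ᶠ v in 𝓝[D] t0, 0 < Nh v :=
      (hNcont t0 ht0D).eventually (eventually_gt_nhds hNpos)
    have hevP : ∀ᶠ v in 𝓝[D] t0, 0 < Ph v :=
      (hPcont t0 ht0D).eventually (eventually_gt_nhds hPpos)
    have hevZ : ∀ᶠ v in 𝓝[D] t0, 0 < Zh v :=
      (hZcont t0 ht0D).eventually (eventually_gt_nhds hZpos)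
    have hev := hevN.and (hevP.and hevZ)
    obtain ⟨ε, hε, hball⟩ := Metric.mem_nhdsWithin_iff.mp hev
    obtain ⟨b, hbB, hblt⟩ := exists_lt_of_csInf_lt hBne (lt_add_of_pos_right t0 hε)
    have hbt0 : t0 ≤ b := csInf_le hBbd hbB
    have hbD : b ∈ D := ⟨by linarith [hbB.1], hbB.2.1⟩
    have hbball : b ∈ Metric.ball t0 ε := by
      rw [Metric.mem_ball, Real.dist_eq, abs_sub_lt_iff]
      constructor <;> linarith
    have hbpos := hball ⟨hbball, hbD⟩
    rcases hbB.2.2 with hc | hc | hc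
    · linarith [hbpos.1]
    · linarith [hbpos.2.1]
    · linarith [hbpos.2.2]
  -- final conclusion
  intro t ht htw
  obtain ⟨hN, hP, hZ⟩ := key t ht htw
  have hall : ∀ u : ℝ, -T ≤ u → (u : EReal) < w → 0 < Nh u ∧ 0 < Ph u ∧ 0 < Zh u := by
    intro u h1 h2
    rcases le_or_gt u 0 with h3 | h3
    · exact hhist u h1 h3
    · exact key u h3.le h2
  have hint : 0 ≤ ∫ s in (0:ℝ)..m, Real.exp (-δ0 * τh s t) * γ * g * Zh (t - s / Rstar) *
      h (Ph (t - s / Rstar)) / R (Ph (t - s / Rstar)) := by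
    apply my_int_nonneg t hγ.1 hg hm.le hRstar hT
    intro u hu1 hu2
    have hu1' : -T ≤ u := by linarith
    have huw : (u : EReal) < w := lt_of_le_of_lt (EReal.coe_le_coe_iff.mpr hu2) htw
    obtain ⟨_, hPu, hZu⟩ := hall u hu1' huw
    exact ⟨hZu.le, hhnn _ hPu.le, hRPpos u hu1' huw⟩
  have hcc := hcons t ht htw
  exact ⟨⟨hN, by linarith⟩, ⟨hP, by linarith⟩, ⟨hZ, by linarith⟩⟩
end

section
/- Suppose P, N, Z : [t0, ∞) → ℝ with P continuously differentiable, P(t) > 0, Z(t) ≥ 0, 0 < N(t) < N_T − P(t), and P'(t) = μP(t)f(N(t)) − λP(t) − gZ(t)h(P(t)) for all t ≥ t0, where h(p) ≥ 0 for p ≥ 0. If N_T > N_{T1} := f⁻¹(λ/μ), then for every constant β with N_T − N_{T1} < β < N_T there exists t1 ≥ t0 such that P(t) < β for all t ≥ t1. -/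
open Real Set Filter Topology

/-- Lemma (eventual upper bound on phytoplankton): if `N_T > N_{T1} = f⁻¹(λ/μ)` then for any
`β` with `N_T − N_{T1} < β < N_T` the phytoplankton concentration eventually stays below `β`. -/
theorem stmt_4 (f h : ℝ → ℝ) (μ lam g NT NT1 t0 : ℝ)
    (hf : ContDiff ℝ 1 f) (hf0 : f 0 = 0) (hf' : ∀ x ≥ (0 : ℝ), 0 < deriv f x)
    (hftop : Tendsto f atTop (𝓝 1))
    (hh : ContDiff ℝ 1 h) (hh0 : h 0 = 0) (hh' : ∀ x ≥ (0 : ℝ), 0 < deriv h x)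
    (hhnn : ∀ p ≥ (0 : ℝ), 0 ≤ h p)
    (hμ : 0 < μ) (hlam : 0 < lam) (hg : 0 < g) (hμlam : lam < μ)
    (hNT1 : 0 ≤ NT1) (hNT1f : f NT1 = lam / μ)
    (P N Z : ℝ → ℝ)
    (hPeq : ∀ t ≥ t0, HasDerivAt P (μ * P t * f (N t) - lam * P t - g * Z t * h (P t)) t)
    (hPpos : ∀ t ≥ t0, 0 < P t)
    (hZnn : ∀ t ≥ t0, 0 ≤ Z t)
    (hNb : ∀ t ≥ t0, 0 < N t ∧ N t < NT - P t)
    (hNT : NT1 < NT)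
    (β : ℝ) (hβ1 : NT - NT1 < β) (hβ2 : β < NT) :
    ∃ t1 ≥ t0, ∀ t ≥ t1, P t < β := by
  have hβpos : 0 < β := by linarith
  have hmono : StrictMonoOn f (Ici 0) := by
    apply strictMonoOn_of_deriv_pos (convex_Ici 0) (hf.continuous.continuousOn)
    intro x hx
    rw [interior_Ici] at hx
    exact hf' x hx.le
  have h1 : f (NT - β) < lam / μ := by
    rw [← hNT1f]
    exact hmono (mem_Ici.2 (by linarith)) (mem_Ici.2 hNT1) (by linarith)
  set δ := lam - μ * f (NT - β) with hδdef
  have hδ : 0 < δ := by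
    have : μ * f (NT - β) < lam := by
      rw [lt_div_iff₀ hμ] at h1; linarith [h1]
    linarith
  -- key derivative bound whenever P t ≥ β
  have key : ∀ t ≥ t0, β ≤ P t →
      μ * P t * f (N t) - lam * P t - g * Z t * h (P t) ≤ -(δ * β) := by
    intro t ht hPt
    obtain ⟨hN0, hNu⟩ := hNb t ht
    have hPt0 := hPpos t ht
    have hfN : f (N t) ≤ f (NT - β) :=
      (hmono hN0.le (mem_Ici.2 (by linarith)) (by linarith)).le
    have hZh : 0 ≤ g * Z t * h (P t) :=
      mul_nonneg (mul_nonneg hg.le (hZnn t ht)) (hhnn _ hPt0.le)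
    have hfNpos : 0 ≤ f (N t) := by
      have := hmono.monotoneOn (mem_Ici.2 le_rfl) hN0.le hN0.le
      rwa [hf0] at this
    have hPexpr : μ * P t * f (N t) - lam * P t ≤ -(δ * P t) := by
      have hle : μ * f (N t) - lam ≤ -δ := by
        have : μ * f (N t) ≤ μ * f (NT - β) := by nlinarith
        linarith
      nlinarith
    have : -(δ * P t) ≤ -(δ * β) := by nlinarith
    linarith
  -- Step 1: there is some time where P < β
  have exists_lt : ∃ s ≥ t0, P s < β := by
    by_contra hc
    push_neg at hc
    have hQ : AntitoneOn (fun t => P t + δ * β * t) (Ici t0) := by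
      have hder : ∀ t ≥ t0, HasDerivAt (fun t => P t + δ * β * t)
          (μ * P t * f (N t) - lam * P t - g * Z t * h (P t) + δ * β) t := by
        intro t ht
        have := (hPeq t ht).add ((hasDerivAt_id t).const_mul (δ * β))
        simp only [id, mul_one] at this
        exact this
      apply antitoneOn_of_deriv_nonpos (convex_Ici t0)
      · intro t ht
        exact (hder t ht).continuousAt.continuousWithinAt
      · intro t ht
        rw [interior_Ici] at ht
        exact (hder t ht.le).differentiableAt.differentiableWithinAt
      · intro t ht
        rw [interior_Ici] at ht
        rw [(hder t ht.le).deriv]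
        have := key t ht.le (hc t ht.le)
        linarith
    set T := t0 + (P t0 + 1) / (δ * β) with hT
    have hδβ : 0 < δ * β := mul_pos hδ hβpos
    have hTt0 : t0 ≤ T := by
      have h0 : 0 ≤ (P t0 + 1) / (δ * β) :=
        div_nonneg (by linarith [hPpos t0 le_rfl]) hδβ.le
      rw [hT]; linarith
    have := hQ (mem_Ici.2 le_rfl) (mem_Ici.2 hTt0) hTt0
    simp only at this
    have hTsub : δ * β * (T - t0) = P t0 + 1 := by
      rw [hT]; field_simp; ring
    have hPT : P T ≤ -1 := by nlinarith
    have := hc T hTt0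
    linarith
  obtain ⟨t1, ht1, hPt1⟩ := exists_lt
  refine ⟨t1, ht1, fun s hs => ?_⟩
  by_contra hc
  push_neg at hc
  set A := Icc t1 s ∩ P ⁻¹' Ici β with hA
  have hPc : ContinuousOn P (Icc t1 s) := fun t ht =>
    (hPeq t (ht1.trans ht.1)).continuousAt.continuousWithinAt
  have hAne : A.Nonempty := ⟨s, ⟨hs, le_rfl⟩, hc⟩
  have hAbdd : BddBelow A := ⟨t1, fun x hx => hx.1.1⟩
  have hAclosed : IsClosed A :=
    hPc.preimage_isClosed_of_isClosed isClosed_Icc isClosed_Ici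
  set c := sInf A with hcdef
  have hcA : c ∈ A := hAclosed.csInf_mem hAne hAbdd
  have hct1 : t1 < c := by
    rcases lt_or_eq_of_le hcA.1.1 with h' | h'
    · exact h'
    · exfalso; have : β ≤ P c := hcA.2; rw [← h'] at this; linarith
  have hct0 : t0 ≤ c := ht1.trans hcA.1.1
  have hd := hPeq c hct0
  have hslope := hasDerivAt_iff_tendsto_slope.1 hd
  have hslope' : Tendsto (slope P c) (𝓝[<] c) (𝓝 (μ * P c * f (N c) - lam * P c - g * Z c * h (P c))) :=
    hslope.mono_left (nhdsWithin_mono c (fun x hx => ne_of_lt hx))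
  have hnonneg : 0 ≤ μ * P c * f (N c) - lam * P c - g * Z c * h (P c) := by
    refine ge_of_tendsto hslope' ?_
    filter_upwards [Ioo_mem_nhdsLT hct1] with t ht
    have htA : t ∉ A := fun hmem => absurd (csInf_le hAbdd hmem) (not_le.2 ht.2)
    have htIcc : t ∈ Icc t1 s := ⟨ht.1.le, ht.2.le.trans hcA.1.2⟩
    have hPtβ : P t < β := by
      by_contra hpb
      exact htA ⟨htIcc, le_of_not_gt hpb⟩
    have hnum : P t - P c ≤ 0 := by have : β ≤ P c := hcA.2; linarith
    have hden : t - c < 0 := by linarith [ht.2]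
    rw [slope_def_field]
    exact div_nonneg_iff.2 (Or.inr ⟨by linarith, hden.le⟩)
  have := key c hct0 hcA.2
  nlinarith
end

section
/- Let δ > 0, T ≥ 0, and b ∈ ℝ with 0 ≤ b < δ. Then every complex number s satisfying s + δ − b e^{−sT} = 0 has Re(s) < 0. -/
open Real Set Filter Topology

/-- Transcendental root-location lemma: if `0 ≤ b < δ` and `T ≥ 0`, every complex root `s`
of `s + δ - b e^{-sT} = 0` has negative real part. -/
theorem stmt_6 (δ T b : ℝ) (hδ : 0 < δ) (hT : 0 ≤ T) (hb : 0 ≤ b) (hbδ : b < δ)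
    (s : ℂ) (hs : s + (δ : ℂ) - (b : ℂ) * Complex.exp (-s * (T : ℂ)) = 0) :
    s.re < 0 := by
  by_contra h
  push_neg at h
  have heq : s + (δ : ℂ) = (b : ℂ) * Complex.exp (-s * (T : ℂ)) := by
    linear_combination hs
  have habs : ‖s + δ‖ = b * Real.exp (-(s.re * T)) := by
    rw [heq, norm_mul, Complex.norm_exp, Complex.norm_real, Real.norm_eq_abs, abs_of_nonneg hb]
    congr 1
    simp [Complex.mul_re]
  have h1 : Real.exp (-(s.re * T)) ≤ 1 := by
    rw [Real.exp_le_one_iff]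
    nlinarith
  have h2 : ‖s + δ‖ ≤ b := by
    calc ‖s + δ‖ = b * Real.exp (-(s.re * T)) := habs
      _ ≤ b * 1 := by nlinarith [Real.exp_pos (-(s.re * T))]
      _ = b := mul_one b
  have h3 : (s + δ).re ≤ ‖s + δ‖ := Complex.re_le_norm _
  simp [Complex.add_re] at h3
  linarith
end

section
/- Let μ, g, γ, δ, δ0, T > 0, P₁* > 0, a > 0, d ≥ 0, and suppose γ g d e^{−δ0 T} < δ. Then every complex root s of (s + μP₁*a)(s + δ0)(s + δ − γ g d e^{−(δ0+s)T}) = 0, which is the characteristic equation of the NPZ system linearized about the phytoplankton-only equilibrium E₁ = (N₁*, P₁*, 0) with a = f'(N₁*) and d = h(P₁*), has Re(s) < 0. -/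
open Real Set Filter Topology

/-- Every complex root of the characteristic equation of the NPZ system linearized about
the phytoplankton-only equilibrium `E₁`,
`(s + μP₁*a)(s + δ0)(s + δ − γgd e^{−(δ0+s)T}) = 0`,
has negative real part, provided `γ g d e^{−δ0 T} < δ`. -/
theorem stmt_7 (μ g γ δ δ0 T P1 a d : ℝ)
    (hμ : 0 < μ) (hg : 0 < g) (hγ : 0 < γ) (hδ : 0 < δ) (hδ0 : 0 < δ0) (hT : 0 < T)
    (hP1 : 0 < P1) (ha : 0 < a) (hd : 0 ≤ d)
    (hcond : γ * g * d * Real.exp (-δ0 * T) < δ)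
    (s : ℂ)
    (hs : (s + ((μ * P1 * a : ℝ) : ℂ)) * (s + ((δ0 : ℝ) : ℂ)) *
        (s + ((δ : ℝ) : ℂ) - ((γ * g * d : ℝ) : ℂ) *
          Complex.exp (-(((δ0 : ℝ) : ℂ) + s) * ((T : ℝ) : ℂ))) = 0) :
    s.re < 0 := by
  rcases mul_eq_zero.1 hs with h12 | h3
  · rcases mul_eq_zero.1 h12 with h1 | h2
    · have : s = -((μ * P1 * a : ℝ) : ℂ) := by linear_combination h1
      rw [this]
      simp only [Complex.neg_re, Complex.ofReal_re]
      nlinarith [mul_pos (mul_pos hμ hP1) ha]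
    · have : s = -((δ0 : ℝ) : ℂ) := by linear_combination h2
      rw [this]
      simp only [Complex.neg_re, Complex.ofReal_re]
      linarith
  · by_contra hre
    push_neg at hre
    have heq : s + ((δ : ℝ) : ℂ) =
        ((γ * g * d : ℝ) : ℂ) * Complex.exp (-(((δ0 : ℝ) : ℂ) + s) * ((T : ℝ) : ℂ)) := by
      linear_combination h3
    have h1 : δ ≤ ‖s + ((δ : ℝ) : ℂ)‖ := by
      have := Complex.abs_re_le_norm (s + ((δ : ℝ) : ℂ))
      have hre' : (s + ((δ : ℝ) : ℂ)).re = s.re + δ := by simp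
      rw [hre'] at this
      have : s.re + δ ≤ |s.re + δ| := le_abs_self _
      calc δ ≤ s.re + δ := by linarith
        _ ≤ |(s + ((δ : ℝ) : ℂ)).re| := by rw [hre']; exact le_abs_self _
        _ ≤ ‖s + ((δ : ℝ) : ℂ)‖ := Complex.abs_re_le_norm _
    have h2 : ‖((γ * g * d : ℝ) : ℂ) *
        Complex.exp (-(((δ0 : ℝ) : ℂ) + s) * ((T : ℝ) : ℂ))‖ ≤
        γ * g * d * Real.exp (-δ0 * T) := by
      rw [norm_mul, Complex.norm_exp, Complex.norm_real, Real.norm_eq_abs]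
      have habs : |γ * g * d| = γ * g * d := abs_of_nonneg (by positivity)
      rw [habs]
      have hrepart : ((-(((δ0 : ℝ) : ℂ) + s) * ((T : ℝ) : ℂ))).re = -(δ0 + s.re) * T := by
        simp [Complex.mul_re]
      rw [hrepart]
      have hle : -(δ0 + s.re) * T ≤ -δ0 * T := by nlinarith
      exact mul_le_mul_of_nonneg_left (Real.exp_le_exp.2 hle) (by positivity)
    rw [heq] at h1
    linarith
end

section
/- Let P : ℝ → ℝ be continuous with R(P(u)) > 0 for all u, let R* > 0, define σ(t) := (1/R*)∫₀^t R(P(u)) du, and suppose σ : ℝ → ℝ is a bijection with inverse σ⁻¹ (which holds e.g. when R∘P is bounded above and bounded below by a positive constant); write P̂ := P ∘ σ⁻¹. Let s ≥ 0, t ∈ ℝ, and let τ ≥ 0 satisfy ∫_{t−τ}^{t} R(P(u)) du = s. Then τ = ∫_{σ(t)−s/R*}^{σ(t)} R*/R(P̂(r)) dr; that is, the threshold delay has the explicit representation τ̂(s, P̂_{t̂}) = ∫_{t̂−s/R*}^{t̂} R*/R(P̂(r)) dr with t̂ = σ(t). -/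
open Real Set Filter Topology

/-- Explicit representation of the threshold delay after Smith's time transformation:
if `∫_{t−τ}^t R(P(u)) du = s` then `τ = ∫_{σ(t)−s/R*}^{σ(t)} R*/R(P̂(r)) dr`,
where `σ(t) = (1/R*)∫₀^t R(P(u)) du` and `P̂ = P ∘ σ⁻¹`. -/
theorem stmt_10 (R P : ℝ → ℝ) (Rstar : ℝ) (hRstar : 0 < Rstar)
    (hR : Continuous R) (hP : Continuous P) (hRP : ∀ u : ℝ, 0 < R (P u))
    (σ σinv : ℝ → ℝ) (hσ : ∀ t : ℝ, σ t = (1 / Rstar) * ∫ u in (0 : ℝ)..t, R (P u))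
    (hbij : Function.Bijective σ)
    (hlinv : Function.LeftInverse σinv σ) (hrinv : Function.RightInverse σinv σ)
    (s t τ : ℝ) (hs : 0 ≤ s) (hτ : 0 ≤ τ)
    (hthr : ∫ u in (t - τ)..t, R (P u) = s) :
    τ = ∫ r in (σ t - s / Rstar)..(σ t), Rstar / R (P (σinv r)) := by
  have hRPc : Continuous (fun u => R (P u)) := hR.comp hP
  have hint : ∀ a b : ℝ, IntervalIntegrable (fun u => R (P u)) MeasureTheory.volume a b :=
    fun a b => hRPc.intervalIntegrable a b
  have hderiv : ∀ x : ℝ, HasDerivAt σ (R (P x) / Rstar) x := by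
    intro x
    have h1 : HasDerivAt (fun t => ∫ u in (0:ℝ)..t, R (P u)) (R (P x)) x :=
      intervalIntegral.integral_hasDerivAt_right (hint 0 x)
        (hRPc.stronglyMeasurableAtFilter _ _) hRPc.continuousAt
    have h2 := h1.const_mul (1 / Rstar)
    have heq : σ = fun t => (1/Rstar) * ∫ u in (0:ℝ)..t, R (P u) := funext hσ
    rw [heq]
    exact h2.congr_deriv (by ring)
  have hmono : StrictMono σ := by
    apply strictMono_of_deriv_pos
    intro x
    rw [(hderiv x).deriv]
    exact div_pos (hRP x) hRstar
  have hσinv_cont : Continuous σinv := by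
    let e := StrictMono.orderIsoOfSurjective σ hmono hbij.2
    have heq : σinv = fun r => e.symm r := by
      funext r
      apply hbij.1
      rw [hrinv r]
      exact (e.apply_symm_apply r).symm
    rw [heq]
    exact e.symm.continuous
  have hgcont : Continuous (fun r => Rstar / R (P (σinv r))) :=
    continuous_const.div (hRPc.comp hσinv_cont) (fun r => (hRP (σinv r)).ne')
  have hσeq : σ (t - τ) = σ t - s / Rstar := by
    have hadd := intervalIntegral.integral_add_adjacent_intervals (hint 0 (t-τ)) (hint (t-τ) t)
    rw [hσ, hσ, ← hadd, hthr]
    ring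
  have hcov := intervalIntegral.integral_comp_mul_deriv
    (f := σ) (f' := fun x => R (P x) / Rstar) (g := fun r => Rstar / R (P (σinv r)))
    (a := t - τ) (b := t) (fun x _ => hderiv x)
    ((hRPc.div_const Rstar).continuousOn) hgcont
  rw [hσeq] at hcov
  rw [← hcov]
  have hone : ∀ x : ℝ, ((fun r => Rstar / R (P (σinv r))) ∘ σ) x * (R (P x) / Rstar) = 1 := by
    intro x
    simp only [Function.comp, hlinv x]
    have h1 : R (P x) ≠ 0 := (hRP x).ne'
    have h2 : Rstar ≠ 0 := hRstar.ne'
    field_simp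
  calc τ = ∫ _ in (t - τ)..t, (1 : ℝ) := by simp
    _ = _ := by
      apply intervalIntegral.integral_congr
      intro x _
      exact (hone x).symm
end

section
/- Suppose δ0 > 0 and let P₀ := h⁻¹(δ/(γg)) > 0. Define F(P) := (R(P)/δ0) ln(γg h(P)/δ) for P ≥ P₀. Then F is continuous and strictly increasing on [P₀, ∞), F(P₀) = 0, and F(P) → R_∞ ln(γg/δ)/δ0 as P → ∞ with F(P) < R_∞ ln(γg/δ)/δ0 for all P. Consequently, for every m with 0 ≤ m < R_∞ ln(γg/δ)/δ0 there exists a unique P₂* ≥ P₀ satisfying m = (R(P₂*)/δ0) ln(γg h(P₂*)/δ), there is no solution for m ≥ R_∞ ln(γg/δ)/δ0, P₂* = P₀ when m = 0, and P₂* is strictly increasing as a function of m. -/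
open Real Set Filter Topology

/-- Existence, uniqueness and monotonicity of the coexistence-equilibrium phytoplankton level:
`F(P) = (R(P)/δ0) ln(γg h(P)/δ)` is continuous and strictly increasing on `[P₀,∞)` with
`F(P₀) = 0`, tends to `R_∞ ln(γg/δ)/δ0` (never attaining it), so for each
`0 ≤ m < R_∞ ln(γg/δ)/δ0` there is a unique `P₂* ≥ P₀` with `F(P₂*) = m`, no solution for
larger `m`, `P₂* = P₀` at `m = 0`, and `P₂*` strictly increasing in `m`. -/
theorem stmt_12 (h R : ℝ → ℝ) (g δ δ0 γ Rinf P0 : ℝ)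
    (hhc : Continuous h) (hhmono : StrictMonoOn h (Ici 0)) (hh0 : h 0 = 0)
    (hhtop : Tendsto h atTop (𝓝 1))
    (hRc : Continuous R) (hRmono : MonotoneOn R (Ici 0))
    (hRpos : ∀ P > (0 : ℝ), 0 < R P) (hRtop : Tendsto R atTop (𝓝 Rinf))
    (hg : 0 < g) (hδ : 0 < δ) (hδ0 : 0 < δ0) (hγ : γ ∈ Ioc (0 : ℝ) 1) (hγg : δ < γ * g)
    (hP0 : 0 < P0) (hP0h : h P0 = δ / (γ * g))
    (F : ℝ → ℝ) (hF : ∀ P : ℝ, F P = R P / δ0 * Real.log (γ * g * h P / δ)) :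
    ContinuousOn F (Ici P0) ∧
    StrictMonoOn F (Ici P0) ∧
    F P0 = 0 ∧
    Tendsto F atTop (𝓝 (Rinf * Real.log (γ * g / δ) / δ0)) ∧
    (∀ P ≥ P0, F P < Rinf * Real.log (γ * g / δ) / δ0) ∧
    (∀ m : ℝ, 0 ≤ m → m < Rinf * Real.log (γ * g / δ) / δ0 →
      ∃! P2 : ℝ, P0 ≤ P2 ∧ F P2 = m) ∧
    (∀ m : ℝ, Rinf * Real.log (γ * g / δ) / δ0 ≤ m → ¬ ∃ P2 : ℝ, P0 ≤ P2 ∧ F P2 = m) ∧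
    (∀ P2 : ℝ, P0 ≤ P2 → F P2 = 0 → P2 = P0) ∧
    (∀ m1 m2 P1 P2 : ℝ, 0 ≤ m1 → m1 < m2 → m2 < Rinf * Real.log (γ * g / δ) / δ0 →
      P0 ≤ P1 → P0 ≤ P2 → F P1 = m1 → F P2 = m2 → P1 < P2) := by
  have hγg0 : 0 < γ * g := lt_trans hδ hγg
  -- h P ≥ δ/(γg) for P ≥ P0
  have hhge : ∀ P, P0 ≤ P → δ / (γ * g) ≤ h P := fun P hP => by
    rw [← hP0h]
    exact hhmono.monotoneOn (le_of_lt hP0) (le_trans (le_of_lt hP0) hP) hP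
  -- argument ≥ 1
  have harg1 : ∀ P, P0 ≤ P → 1 ≤ γ * g * h P / δ := fun P hP => by
    rw [le_div_iff₀ hδ, one_mul]
    calc δ = γ * g * (δ / (γ * g)) := by field_simp [hγ.1.ne']
    _ ≤ γ * g * h P := mul_le_mul_of_nonneg_left (hhge P hP) (le_of_lt hγg0)
  have hargpos : ∀ P, P0 ≤ P → 0 < γ * g * h P / δ := fun P hP =>
    lt_of_lt_of_le one_pos (harg1 P hP)
  -- h P < 1 for P ≥ 0
  have hlt1 : ∀ P, 0 ≤ P → h P < 1 := fun P hP => by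
    have h1 : h P < h (P + 1) := hhmono hP (mem_Ici.2 (by linarith)) (by linarith)
    have h2 : h (P + 1) ≤ 1 := by
      refine ge_of_tendsto hhtop ?_
      filter_upwards [eventually_ge_atTop (P + 1)] with Q hQ
      exact hhmono.monotoneOn (mem_Ici.2 (by linarith)) (mem_Ici.2 (by linarith)) hQ
    linarith
  -- R P ≤ Rinf for P ≥ 0
  have hRle : ∀ P, 0 ≤ P → R P ≤ Rinf := fun P hP => by
    refine ge_of_tendsto hRtop ?_
    filter_upwards [eventually_ge_atTop P] with Q hQ
    exact hRmono hP (le_trans hP hQ) hQ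
  have hRP : ∀ P, P0 ≤ P → 0 < R P := fun P hP => hRpos P (lt_of_lt_of_le hP0 hP)
  -- log bounds
  have hLnonneg : ∀ P, P0 ≤ P → 0 ≤ Real.log (γ * g * h P / δ) := fun P hP =>
    Real.log_nonneg (harg1 P hP)
  have hLmaxpos : 0 < Real.log (γ * g / δ) :=
    Real.log_pos (by rw [lt_div_iff₀ hδ, one_mul]; exact hγg)
  have hLlt : ∀ P, P0 ≤ P → Real.log (γ * g * h P / δ) < Real.log (γ * g / δ) := fun P hP => by
    apply Real.log_lt_log (hargpos P hP)
    apply div_lt_div_of_pos_right _ hδ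
    calc γ * g * h P < γ * g * 1 :=
      mul_lt_mul_of_pos_left (hlt1 P (le_trans hP0.le hP)) hγg0
    _ = γ * g := mul_one _
  -- F P0 = 0
  have hFP0 : F P0 = 0 := by
    rw [hF, hP0h]
    have : γ * g * (δ / (γ * g)) / δ = 1 := by field_simp [hγ.1.ne']
    rw [this, Real.log_one, mul_zero]
  -- continuity
  have hFcont : ContinuousOn F (Ici P0) := by
    have : ContinuousOn (fun P => R P / δ0 * Real.log (γ * g * h P / δ)) (Ici P0) := by
      apply ContinuousOn.mul ((hRc.div_const δ0).continuousOn)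
      exact ContinuousOn.log (((continuous_const.mul hhc).div_const δ).continuousOn)
        (fun P hP => ne_of_gt (hargpos P hP))
    exact this.congr (fun P _ => hF P)
  -- strict mono
  have hFmono : StrictMonoOn F (Ici P0) := by
    intro a ha b hb hab
    rw [hF a, hF b]
    have hLa := hLnonneg a ha
    have hLab : Real.log (γ * g * h a / δ) < Real.log (γ * g * h b / δ) := by
      apply Real.log_lt_log (hargpos a ha)
      apply div_lt_div_of_pos_right _ hδ
      exact mul_lt_mul_of_pos_left
        (hhmono (le_trans hP0.le ha) (le_trans hP0.le hb) hab) hγg0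
    have hRab : R a ≤ R b := hRmono (le_trans hP0.le ha) (le_trans hP0.le hb) hab.le
    have hRa := hRP a ha
    have h1 : R a / δ0 * Real.log (γ * g * h a / δ) < R a / δ0 * Real.log (γ * g * h b / δ) :=
      mul_lt_mul_of_pos_left hLab (div_pos hRa hδ0)
    have h2 : R a / δ0 * Real.log (γ * g * h b / δ) ≤ R b / δ0 * Real.log (γ * g * h b / δ) :=
      mul_le_mul_of_nonneg_right (div_le_div_of_nonneg_right hRab hδ0.le) -- note order
        (le_trans hLa hLab.le)
    linarith
  -- strict bound
  have hFbound : ∀ P ≥ P0, F P < Rinf * Real.log (γ * g / δ) / δ0 := by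
    intro P hP
    rw [hF P, div_mul_eq_mul_div]
    apply div_lt_div_of_pos_right _ hδ0
    calc R P * Real.log (γ * g * h P / δ) < R P * Real.log (γ * g / δ) :=
      mul_lt_mul_of_pos_left (hLlt P hP) (hRP P hP)
    _ ≤ Rinf * Real.log (γ * g / δ) :=
      mul_le_mul_of_nonneg_right (hRle P (le_trans hP0.le hP)) hLmaxpos.le
  -- tendsto
  have hFtend : Tendsto F atTop (𝓝 (Rinf * Real.log (γ * g / δ) / δ0)) := by
    have harg : Tendsto (fun P => γ * g * h P / δ) atTop (𝓝 (γ * g / δ)) := by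
      have h1 : Tendsto (fun P => γ * g * h P) atTop (𝓝 (γ * g * 1)) :=
        (tendsto_const_nhds : Tendsto (fun _ : ℝ => γ * g) atTop (𝓝 (γ * g))).mul hhtop
      have h2 := h1.div_const δ
      simpa using h2
    have hlog : Tendsto (fun P => Real.log (γ * g * h P / δ)) atTop
        (𝓝 (Real.log (γ * g / δ))) :=
      (Real.continuousAt_log (ne_of_gt (div_pos hγg0 hδ))).tendsto.comp harg
    have := (hRtop.div_const δ0).mul hlog
    have heq : Rinf / δ0 * Real.log (γ * g / δ) = Rinf * Real.log (γ * g / δ) / δ0 := by ring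
    rw [heq] at this
    exact this.congr (fun P => (hF P).symm)
  refine ⟨hFcont, hFmono, hFP0, hFtend, hFbound, ?_, ?_, ?_, ?_⟩
  · -- existence and uniqueness
    intro m hm0 hmlt
    obtain ⟨b, hbm, hbP0⟩ :=
      ((hFtend.eventually (eventually_gt_nhds hmlt)).and (eventually_ge_atTop P0)).exists
    have hsub : Icc P0 b ⊆ Ici P0 := Icc_subset_Ici_self
    have : m ∈ Icc (F P0) (F b) := ⟨hFP0 ▸ hm0, hbm.le⟩
    obtain ⟨c, hc, hFc⟩ := intermediate_value_Icc hbP0 (hFcont.mono hsub) this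
    refine ⟨c, ⟨hc.1, hFc⟩, ?_⟩
    rintro y ⟨hy1, hy2⟩
    exact hFmono.injOn hy1 hc.1 (hy2.trans hFc.symm)
  · rintro m hm ⟨P2, hP2, hFP2⟩
    have := hFbound P2 hP2
    linarith
  · intro P2 hP2 hFP2
    exact hFmono.injOn hP2 (self_mem_Ici) (hFP2.trans hFP0.symm)
  · intro m1 m2 P1 P2 _ h12 _ hP1 hP2 hF1 hF2
    by_contra hle
    push_neg at hle
    have := hFmono.monotoneOn hP2 hP1 hle
    rw [hF1, hF2] at this
    linarith
end

section
/- Let K : ℝⁿ → ℝ be continuously differentiable, x* ∈ ℝⁿ with K(x*) > 0, m > 0, τ* := m/K(x*), and r > τ*. Let x̄* denote the constant function with value x* in C([−r,0], ℝⁿ) equipped with the supremum norm. Suppose U is a neighborhood of x̄* and τ : U → (0, r) satisfies the threshold condition ∫_{−τ(φ)}^{0} K(φ(u)) du = m for all φ ∈ U, with τ(x̄*) = τ* and τ continuous at x̄*. Then lim_{h→0} |τ(x̄* + h) − τ* + (1/K(x*)) ∫_{−τ*}^{0} DK(x*)(h(u)) du| / ‖h‖_∞ = 0; that is, τ is Fréchet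 differentiable at x̄* with derivative Dτ(x̄*)h = −(1/K(x*)) ∫_{−τ*}^{0} DK(x*)(h(u)) du. -/
open Real Set Filter Topology

set_option maxHeartbeats 1000000

/-- Fréchet differentiability of the state-dependent threshold delay at a constant
(equilibrium) state: if `τ(φ)` is defined by the threshold condition
`∫_{−τ(φ)}^0 K(φ(u)) du = m` for `φ` near the constant history `x̄*`, then
`τ(x̄* + h) − τ* = −(1/K(x*)) ∫_{−τ*}^0 DK(x*)(h(u)) du + o(‖h‖)`. -/
theorem stmt_14 (n : ℕ) (K : EuclideanSpace ℝ (Fin n) → ℝ)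
    (hK : ContDiff ℝ 1 K)
    (xs : EuclideanSpace ℝ (Fin n)) (hKx : 0 < K xs)
    (K' : EuclideanSpace ℝ (Fin n) →L[ℝ] ℝ) (hK' : HasFDerivAt K K' xs)
    (m r τs : ℝ) (hm : 0 < m) (hτs : τs = m / K xs) (hr : τs < r) (hr0 : 0 < r)
    (U : Set C(Icc (-r) (0 : ℝ), EuclideanSpace ℝ (Fin n)))
    (hU : U ∈ 𝓝 (ContinuousMap.const (Icc (-r) (0 : ℝ)) xs))
    (τ : C(Icc (-r) (0 : ℝ), EuclideanSpace ℝ (Fin n)) → ℝ)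
    (hτpos : ∀ φ ∈ U, 0 < τ φ ∧ τ φ < r)
    (hτthr : ∀ φ ∈ U,
      (∫ u in (-(τ φ))..(0 : ℝ), K (φ (Set.projIcc (-r) 0 (by linarith) u))) = m)
    (hτeq : τ (ContinuousMap.const (Icc (-r) (0 : ℝ)) xs) = τs)
    (hτcont : ContinuousAt τ (ContinuousMap.const (Icc (-r) (0 : ℝ)) xs)) :
    Tendsto
      (fun hfun : C(Icc (-r) (0 : ℝ), EuclideanSpace ℝ (Fin n)) =>
        |τ (ContinuousMap.const (Icc (-r) (0 : ℝ)) xs + hfun) - τs +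
            (1 / K xs) *
              ∫ u in (-τs)..(0 : ℝ), K' (hfun (Set.projIcc (-r) 0 (by linarith) u))| /
          ‖hfun‖)
      (𝓝[≠] 0) (𝓝 0) := by
  have hproj : (-r : ℝ) ≤ 0 := by linarith
  set pt := ContinuousMap.const (Icc (-r) (0 : ℝ)) xs with hpt
  set c := K xs with hcdef
  have hc : (0 : ℝ) < c := hKx
  have hm' : τs * c = m := by rw [hτs]; field_simp
  have hτspos : 0 < τs := by rw [hτs]; positivity
  have hKd : Differentiable ℝ K := hK.differentiable one_ne_zero
  have hfc : Continuous (fderiv ℝ K) := hK.continuous_fderiv one_ne_zero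
  have hfxs : fderiv ℝ K xs = K' := hK'.fderiv
  rw [Metric.tendsto_nhdsWithin_nhds]
  intro ε hε
  set N := r + ‖K'‖ with hNdef
  have hN0 : 0 < N := by have := norm_nonneg K'; linarith
  set ε₁ := ε * c / (N + 1) with hε₁def
  have hε₁pos : 0 < ε₁ := by positivity
  have hε₁N : ε₁ * (N + 1) = ε * c := by
    rw [hε₁def]; field_simp
  -- δ₁ : neighborhood where fderiv is ε₁-close to K'
  obtain ⟨δ₁, hδ₁pos, hδ₁⟩ := Metric.continuousAt_iff.mp hfc.continuousAt ε₁ hε₁pos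
  -- key uniform estimate
  have key : ∀ v : EuclideanSpace ℝ (Fin n), ‖v‖ < δ₁ →
      ‖K (xs + v) - c - K' v‖ ≤ ε₁ * ‖v‖ := by
    intro v hv
    have hconv : Convex ℝ (Metric.ball (0 : EuclideanSpace ℝ (Fin n)) δ₁) :=
      convex_ball 0 δ₁
    have hder : ∀ y ∈ Metric.ball (0 : EuclideanSpace ℝ (Fin n)) δ₁,
        HasFDerivWithinAt (fun w => K (xs + w) - K' w) (fderiv ℝ K (xs + y) - K')
          (Metric.ball (0 : EuclideanSpace ℝ (Fin n)) δ₁) y := by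
      intro y _
      have h1 : HasFDerivAt (fun w => K (xs + w)) (fderiv ℝ K (xs + y)) y := by
        have h2 := (hKd (xs + y)).hasFDerivAt.comp y ((hasFDerivAt_id y).const_add xs)
        exact h2
      exact (h1.sub K'.hasFDerivAt).hasFDerivWithinAt
    have hbd : ∀ y ∈ Metric.ball (0 : EuclideanSpace ℝ (Fin n)) δ₁,
        ‖fderiv ℝ K (xs + y) - K'‖ ≤ ε₁ := by
      intro y hy
      have hyd : dist (xs + y) xs < δ₁ := by
        simpa [dist_eq_norm] using Metric.mem_ball.mp hy
      have := hδ₁ hyd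
      rw [hfxs] at this
      exact le_of_lt (by simpa [dist_eq_norm] using this)
    have h0 : (0 : EuclideanSpace ℝ (Fin n)) ∈ Metric.ball (0 : EuclideanSpace ℝ (Fin n)) δ₁ :=
      Metric.mem_ball_self hδ₁pos
    have hvb : v ∈ Metric.ball (0 : EuclideanSpace ℝ (Fin n)) δ₁ := by
      simpa [Metric.mem_ball, dist_eq_norm] using hv
    have h4 := Convex.norm_image_sub_le_of_norm_hasFDerivWithin_le hder hbd hconv h0 hvb
    have h3 : |K (xs + v) - K' v - K xs| ≤ ε₁ * ‖v‖ := by simpa using h4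
    rw [Real.norm_eq_abs,
      show K (xs + v) - c - K' v = K (xs + v) - K' v - K xs from by rw [hcdef]; ring]
    exact h3
  -- δ₂ : neighborhood where φ ∈ U and τ is ε₁-close to τs
  have hVmem : ∀ᶠ φ in 𝓝 pt, φ ∈ U ∧ dist (τ φ) τs < ε₁ := by
    have h2 : ∀ᶠ φ in 𝓝 pt, dist (τ φ) τs < ε₁ := by
      have := hτcont (Metric.ball_mem_nhds (τ pt) hε₁pos)
      filter_upwards [this] with φ hφ
      have : dist (τ φ) (τ pt) < ε₁ := Metric.mem_ball.mp hφ
      rwa [hτeq] at this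
    filter_upwards [hU, h2] with φ h1 h2 using ⟨h1, h2⟩
  obtain ⟨δ₂, hδ₂pos, hδ₂⟩ := Metric.eventually_nhds_iff.mp hVmem
  refine ⟨min δ₁ δ₂, lt_min hδ₁pos hδ₂pos, ?_⟩
  intro h hne hdist
  have hne' : h ≠ 0 := by simpa using hne
  have hh0 : 0 < ‖h‖ := norm_pos_iff.mpr hne'
  have hdist' : ‖h‖ < min δ₁ δ₂ := by simpa using hdist
  have hhδ₁ : ‖h‖ < δ₁ := lt_of_lt_of_le hdist' (min_le_left _ _)
  have hφ : dist (pt + h) pt < δ₂ := by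
    have : ‖h‖ < δ₂ := lt_of_lt_of_le hdist' (min_le_right _ _)
    simpa [dist_eq_norm] using this
  obtain ⟨hφU, hφτ⟩ := hδ₂ hφ
  set T := τ (pt + h) with hTdef
  obtain ⟨hTpos, hTr⟩ := hτpos _ hφU
  have hTτs : |T - τs| < ε₁ := by simpa [Real.dist_eq] using hφτ
  set p : ℝ → EuclideanSpace ℝ (Fin n) := fun u => h (Set.projIcc (-r) 0 hproj u) with hp
  have hpc : Continuous p := h.continuous.comp continuous_projIcc
  have hpbd : ∀ u, ‖p u‖ ≤ ‖h‖ := fun u => h.norm_coe_le_norm _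
  have hfI : Continuous fun u => K (xs + p u) := hK.continuous.comp (continuous_const.add hpc)
  have hgI : Continuous fun u => (K' (p u) : ℝ) := K'.continuous.comp hpc
  have hthr : (∫ u in (-T)..(0 : ℝ), K (xs + p u)) = m := by
    have h1 := hτthr _ hφU
    have h2 : ∀ u : ℝ, K ((pt + h) (Set.projIcc (-r) 0 hproj u)) = K (xs + p u) := by
      intro u
      simp [hpt, hp, ContinuousMap.add_apply]
    exact h1
  set A := ∫ u in (-T)..(0 : ℝ), (K (xs + p u) - c - K' (p u)) with hA
  set B := ∫ u in (-T)..(-τs), (K' (p u) : ℝ) with hB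
  set Gs := ∫ u in (-τs)..(0 : ℝ), (K' (p u) : ℝ) with hGs
  have eSplit : B + Gs = ∫ u in (-T)..(0 : ℝ), (K' (p u) : ℝ) :=
    intervalIntegral.integral_add_adjacent_intervals
      (hgI.intervalIntegrable _ _) (hgI.intervalIntegrable _ _)
  have eA : A = m - T * c - (B + Gs) := by
    rw [hA, eSplit,
      intervalIntegral.integral_sub (f := fun u => K (xs + p u) - c) (g := fun u => K' (p u))
        ((hfI.sub continuous_const).intervalIntegrable _ _) (hgI.intervalIntegrable _ _),
      intervalIntegral.integral_sub (hfI.intervalIntegrable _ _)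
        (continuous_const.intervalIntegrable _ _),
      hthr, intervalIntegral.integral_const]
    simp [smul_eq_mul]
  have hcE : c * (T - τs + (1 / c) * Gs) = -A - B := by
    have hexp : c * (T - τs + (1 / c) * Gs) = c * (T - τs) + Gs := by
      field_simp
    rw [hexp]
    have : c * (T - τs) = T * c - m := by rw [← hm']; ring
    linarith [eA]
  -- bounds
  have hAbd : |A| ≤ ε₁ * ‖h‖ * r := by
    have h1 : ‖A‖ ≤ (ε₁ * ‖h‖) * |(0 : ℝ) - (-T)| := by
      apply intervalIntegral.norm_integral_le_of_norm_le_const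
      intro u _
      calc ‖K (xs + p u) - c - K' (p u)‖ ≤ ε₁ * ‖p u‖ :=
            key (p u) (lt_of_le_of_lt (hpbd u) hhδ₁)
        _ ≤ ε₁ * ‖h‖ := by
            exact mul_le_mul_of_nonneg_left (hpbd u) hε₁pos.le
    have h2 : |(0 : ℝ) - (-T)| = T := by rw [abs_of_pos (by linarith)]; ring
    rw [Real.norm_eq_abs, h2] at h1
    calc |A| ≤ ε₁ * ‖h‖ * T := h1
      _ ≤ ε₁ * ‖h‖ * r := by
          exact mul_le_mul_of_nonneg_left hTr.le (by positivity)
  have hBbd : |B| ≤ ‖K'‖ * ‖h‖ * ε₁ := by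
    have h1 : ‖B‖ ≤ (‖K'‖ * ‖h‖) * |(-τs) - (-T)| := by
      apply intervalIntegral.norm_integral_le_of_norm_le_const
      intro u _
      calc ‖(K' (p u) : ℝ)‖ ≤ ‖K'‖ * ‖p u‖ := K'.le_opNorm _
        _ ≤ ‖K'‖ * ‖h‖ := mul_le_mul_of_nonneg_left (hpbd u) (norm_nonneg _)
    have h2 : |(-τs) - (-T)| = |T - τs| := by rw [show (-τs) - (-T) = T - τs by ring]
    rw [Real.norm_eq_abs, h2] at h1
    calc |B| ≤ ‖K'‖ * ‖h‖ * |T - τs| := h1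
      _ ≤ ‖K'‖ * ‖h‖ * ε₁ := by
          exact mul_le_mul_of_nonneg_left hTτs.le (by positivity)
  have hEbd : c * |T - τs + (1 / c) * Gs| ≤ ε₁ * ‖h‖ * N := by
    have h1 : c * |T - τs + (1 / c) * Gs| = |c * (T - τs + (1 / c) * Gs)| := by
      rw [abs_mul, abs_of_pos hc]
    rw [h1, hcE]
    calc |-A - B| ≤ |A| + |B| := by
          rw [show -A - B = -(A + B) from by ring, abs_neg]
          exact abs_add_le _ _
      _ ≤ ε₁ * ‖h‖ * r + ‖K'‖ * ‖h‖ * ε₁ := add_le_add hAbd hBbd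
      _ = ε₁ * ‖h‖ * N := by rw [hNdef]; ring
  have hfin : |T - τs + (1 / c) * Gs| < ε * ‖h‖ := by
    have h1 : c * |T - τs + (1 / c) * Gs| < c * (ε * ‖h‖) := by
      have h3 : ε₁ * ‖h‖ * N + ε₁ * ‖h‖ = c * (ε * ‖h‖) := by
        rw [show ε₁ * ‖h‖ * N + ε₁ * ‖h‖ = ε₁ * (N + 1) * ‖h‖ from by ring, hε₁N]; ring
      calc c * |T - τs + (1 / c) * Gs| ≤ ε₁ * ‖h‖ * N := hEbd
        _ < ε₁ * ‖h‖ * N + ε₁ * ‖h‖ := by linarith [mul_pos hε₁pos hh0]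
        _ = c * (ε * ‖h‖) := h3
    exact lt_of_mul_lt_mul_left h1 hc.le
  show dist (|T - τs + (1 / c) * Gs| / ‖h‖) 0 < ε
  rw [Real.dist_eq, sub_zero, abs_of_nonneg (by positivity)]
  rw [div_lt_iff₀ hh0]
  linarith [hfin]
end

section
/- Let P, Z : [−t0, ∞) → ℝ be continuously differentiable with P(t) > 0 for all t, and for s ≥ 0 and t with ∫_{−t0}^{t} R(P(u)) du ≥ s let τ(s,t) ≥ 0 be defined by ∫_{t−τ(s,t)}^{t} R(P(u)) du = s. Define ρ(t,s) := e^{−δ0 τ(s,t)} γg Z(t−τ(s,t)) h(P(t−τ(s,t))) / R(P(t−τ(s,t))). Then ρ has partial derivatives ∂ρ/∂t and ∂ρ/∂s on its domain and satisfies the transport equation ∂ρ/∂t(t,s) + R(P(t)) ∂ρ/∂s(t,s) = −δ0 ρ(t,s), together with the boundary condition R(P(t)) ρ(t,0) = γg Z(t) h(P(t)). -/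
open Real Set Filter Topology

/-- The formula obtained by the method of characteristics,
`ρ(t,s) = e^{−δ0 τ(s,t)} γg Z(t−τ(s,t)) h(P(t−τ(s,t))) / R(P(t−τ(s,t)))`,
solves the maturity-structured juvenile-zooplankton transport equation
`ρ_t + R(P(t)) ρ_s = −δ0 ρ` with birth-rate boundary condition
`R(P(t)) ρ(t,0) = γg Z(t) h(P(t))`. -/
theorem stmt_18 (h R : ℝ → ℝ) (g γ δ0 t0 : ℝ)
    (hh : ContDiff ℝ 1 h) (hR : ContDiff ℝ 1 R) (hRpos : ∀ p > (0 : ℝ), 0 < R p)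
    (hg : 0 < g) (hγ : 0 < γ) (hδ0 : 0 ≤ δ0)
    (P Z : ℝ → ℝ) (hP : ContDiff ℝ 1 P) (hZ : ContDiff ℝ 1 Z)
    (hPpos : ∀ t : ℝ, 0 < P t)
    (τ : ℝ → ℝ → ℝ)
    (hτ : ∀ s t : ℝ, 0 ≤ s → s ≤ ∫ u in (-t0)..t, R (P u) →
      0 ≤ τ s t ∧ ∫ u in (t - τ s t)..t, R (P u) = s)
    (ρ : ℝ → ℝ → ℝ)
    (hρ : ∀ t s : ℝ, ρ t s = Real.exp (-δ0 * τ s t) * γ * g * Z (t - τ s t)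
      * h (P (t - τ s t)) / R (P (t - τ s t))) :
    (∀ t s : ℝ, 0 < s → s < ∫ u in (-t0)..t, R (P u) →
      ∃ ρt ρs : ℝ,
        HasDerivAt (fun t' => ρ t' s) ρt t ∧
        HasDerivAt (fun s' => ρ t s') ρs s ∧
        ρt + R (P t) * ρs = -δ0 * ρ t s) ∧
    (∀ t : ℝ, 0 ≤ ∫ u in (-t0)..t, R (P u) →
      R (P t) * ρ t 0 = γ * g * Z t * h (P t)) := by
  have cont : Continuous fun u => R (P u) :=
    (hR.continuous).comp (hP.continuous)
  set G : ℝ → ℝ := fun t => ∫ u in (-t0)..t, R (P u) with hGdef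
  have hGd : ∀ x : ℝ, HasStrictDerivAt G (R (P x)) x := by
    intro x; rw [hGdef]; exact cont.integral_hasStrictDerivAt (-t0) x
  have hGcont : Continuous G :=
    continuous_iff_continuousAt.2 fun x => ((hGd x).hasDerivAt).continuousAt
  have hRPne : ∀ x : ℝ, R (P x) ≠ 0 := fun x => (hRpos _ (hPpos x)).ne'
  have hGmono : StrictMono G := by
    apply strictMono_of_deriv_pos
    intro x
    rw [(hGd x).hasDerivAt.deriv]
    exact hRpos _ (hPpos x)
  have hkey : ∀ s t : ℝ, 0 ≤ s → s ≤ G t → G (t - τ s t) = G t - s := by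
    intro s t h0 h1
    obtain ⟨-, h2⟩ := hτ s t h0 h1
    have hadd : (∫ u in (-t0)..(t - τ s t), R (P u))
        + ∫ u in (t - τ s t)..t, R (P u) = ∫ u in (-t0)..t, R (P u) :=
      intervalIntegral.integral_add_adjacent_intervals
        (cont.intervalIntegrable _ _) (cont.intervalIntegrable _ _)
    rw [h2] at hadd
    simp only [hGdef]
    linarith
  set F : ℝ → ℝ := fun x => Real.exp (δ0 * x) * γ * g * Z x * h (P x) / R (P x)
    with hFdef
  have hρF : ∀ t s : ℝ, ρ t s = Real.exp (-δ0 * t) * F (t - τ s t) := by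
    intro t s
    rw [hρ]
    simp only [hFdef]
    have he : Real.exp (-δ0 * τ s t)
        = Real.exp (-δ0 * t) * Real.exp (δ0 * (t - τ s t)) := by
      rw [← Real.exp_add]; ring_nf
    rw [he]; ring
  have hFdiff : ∀ x : ℝ, HasDerivAt F (deriv F x) x := by
    intro x
    apply DifferentiableAt.hasDerivAt
    apply DifferentiableAt.div
    · exact ((((Real.differentiable_exp.comp
        ((differentiable_const δ0).mul differentiable_id)).mul
        (differentiable_const γ)).mul (differentiable_const g)).mul
        (hZ.differentiable one_ne_zero)).differentiableAt.mul
        ((hh.differentiable one_ne_zero).comp (hP.differentiable one_ne_zero)).differentiableAt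
    · exact ((hR.differentiable one_ne_zero).comp (hP.differentiable one_ne_zero)).differentiableAt
    · exact hRPne x
  constructor
  · intro t s hs0 hs1
    set a := t - τ s t with ha
    have hGa : G a = G t - s := hkey s t hs0.le hs1.le
    have hVd := (hGd a).to_localInverse (hRPne a)
    set V := (hGd a).localInverse G (R (P a)) a (hRPne a) with hV
    have hright : ∀ᶠ y in 𝓝 (G a), G (V y) = y :=
      ((hGd a).hasStrictFDerivAt_equiv (hRPne a)).eventually_right_inverse
    have haV : a = V (G a) := (hGmono.injective hright.self_of_nhds).symm
    rw [hGa] at haV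
    -- t-direction
    have hev1 : ∀ᶠ t' in 𝓝 t, s < G t' :=
      hGcont.continuousAt.eventually (lt_mem_nhds hs1)
    have hev2 : ∀ᶠ t' in 𝓝 t, G (V (G t' - s)) = G t' - s := by
      have htend : Tendsto (fun t' => G t' - s) (𝓝 t) (𝓝 (G a)) := by
        rw [hGa]
        exact hGcont.continuousAt.sub tendsto_const_nhds
      exact htend.eventually hright
    have hevt : (fun t' => ρ t' s)
        =ᶠ[𝓝 t] fun t' => Real.exp (-δ0 * t') * F (V (G t' - s)) := by
      filter_upwards [hev1, hev2] with t' h1 h2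
      have hτ' := hkey s t' hs0.le h1.le
      have heq : t' - τ s t' = V (G t' - s) := hGmono.injective (by rw [hτ', h2])
      rw [hρF t' s, heq]
    have hVa : HasDerivAt (fun t' => V (G t' - s)) ((R (P a))⁻¹ * R (P t)) t := by
      have h1 : HasDerivAt (fun t' => G t' - s) (R (P t)) t :=
        (hGd t).hasDerivAt.sub_const s
      have h2 : HasDerivAt V (R (P a))⁻¹ (G t - s) := hGa ▸ hVd.hasDerivAt
      exact h2.comp t h1
    set d := deriv F a with hd
    have hFa : HasDerivAt F d (V (G t - s)) := haV ▸ hFdiff a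
    have hexp : HasDerivAt (fun t' => Real.exp (-δ0 * t'))
        (Real.exp (-δ0 * t) * (-δ0 * 1)) t :=
      ((hasDerivAt_id t).const_mul (-δ0)).exp
    have hρt : HasDerivAt (fun t' => ρ t' s)
        (Real.exp (-δ0 * t) * (-δ0 * 1) * F (V (G t - s))
          + Real.exp (-δ0 * t) * (d * ((R (P a))⁻¹ * R (P t)))) t :=
      (hexp.mul (hFa.comp t hVa)).congr_of_eventuallyEq hevt
    -- s-direction
    have hev1s : ∀ᶠ s' in 𝓝 s, 0 < s' ∧ s' < G t :=
      (eventually_gt_nhds hs0).and (eventually_lt_nhds hs1)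
    have hev2s : ∀ᶠ s' in 𝓝 s, G (V (G t - s')) = G t - s' := by
      have htend : Tendsto (fun s' => G t - s') (𝓝 s) (𝓝 (G a)) := by
        rw [hGa]
        exact tendsto_const_nhds.sub tendsto_id
      exact htend.eventually hright
    have hevs : (fun s' => ρ t s')
        =ᶠ[𝓝 s] fun s' => Real.exp (-δ0 * t) * F (V (G t - s')) := by
      filter_upwards [hev1s, hev2s] with s' h1 h2
      have hτ' := hkey s' t h1.1.le h1.2.le
      have heq : t - τ s' t = V (G t - s') := hGmono.injective (by rw [hτ', h2])
      rw [hρF t s', heq]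
    have hVs : HasDerivAt (fun s' => V (G t - s')) ((R (P a))⁻¹ * -1) s := by
      have h1 : HasDerivAt (fun s' => G t - s') (-1) s :=
        (hasDerivAt_id s).const_sub (G t)
      have h2 : HasDerivAt V (R (P a))⁻¹ (G t - s) := hGa ▸ hVd.hasDerivAt
      exact h2.comp s h1
    have hρs : HasDerivAt (fun s' => ρ t s')
        (Real.exp (-δ0 * t) * (d * ((R (P a))⁻¹ * -1))) s :=
      (((hFa.comp s hVs).const_mul (Real.exp (-δ0 * t)))).congr_of_eventuallyEq hevs
    refine ⟨_, _, hρt, hρs, ?_⟩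
    have hval : ρ t s = Real.exp (-δ0 * t) * F a := hρF t s
    rw [hval, ← haV]
    ring
  · intro t ht
    obtain ⟨hτ0, -⟩ := hτ 0 t le_rfl ht
    have hGeq : G (t - τ 0 t) = G t - 0 := hkey 0 t le_rfl ht
    have htt : t - τ 0 t = t := hGmono.injective (by rw [hGeq]; ring)
    have hτz : τ 0 t = 0 := by linarith
    rw [hρ, hτz]
    simp only [mul_zero, neg_zero, sub_zero, Real.exp_zero]
    field_simp [hRPne t]
end

section
/- Let (N, P, Z, ρ) be a classical solution of the full structured NPZ model (the PDE1 model) on [0, ∞) × [0, m], with N, P, Z continuously differentiable, ρ continuously differentiable in (t,s). Then the total biomass t ↦ N(t) + P(t) + Z(t) + ∫₀^m ρ(t,s) ds is constant in t; i.e., the system satisfies the conservation law N(t) + P(t) + Z(t) + ∫₀^m ρ(t,s) ds = N_T for all t ≥ 0, where N_T is its value at t = 0. -/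
open Real Set Filter Topology intervalIntegral MeasureTheory

/-- Conservation of total biomass for the full structured NPZ model (PDE1): for a classical
solution `(N, P, Z, ρ)`, the total biomass `N(t) + P(t) + Z(t) + ∫₀^m ρ(t,s) ds` is constant
in time, equal to its value `N_T` at `t = 0`. -/
theorem stmt_19 (f h R : ℝ → ℝ) (μ lam g δ δ0 γ m NT : ℝ)
    (hfc : Continuous f) (hhc : Continuous h) (hRc : Continuous R)
    (hμ : 0 < μ) (hlam : 0 < lam) (hg : 0 < g) (hδ : 0 < δ) (hδ0 : 0 ≤ δ0)
    (hγ : γ ∈ Ioc (0 : ℝ) 1) (hm : 0 < m)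
    (N P Z : ℝ → ℝ) (ρ ρt ρs : ℝ → ℝ → ℝ)
    (hNc : ContinuousOn (deriv N) (Ici 0)) (hPc : ContinuousOn (deriv P) (Ici 0))
    (hZc : ContinuousOn (deriv Z) (Ici 0))
    (hρcont : ContinuousOn (fun p : ℝ × ℝ => ρ p.1 p.2) (Ici 0 ×ˢ Icc 0 m))
    (hρtcont : ContinuousOn (fun p : ℝ × ℝ => ρt p.1 p.2) (Ici 0 ×ˢ Icc 0 m))
    (hρscont : ContinuousOn (fun p : ℝ × ℝ => ρs p.1 p.2) (Ici 0 ×ˢ Icc 0 m))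
    (hρderiv : ∀ t ≥ (0 : ℝ), ∀ s ∈ Icc (0 : ℝ) m,
      HasDerivAt (fun t' => ρ t' s) (ρt t s) t ∧ HasDerivAt (fun s' => ρ t s') (ρs t s) s)
    (hpde : ∀ t ≥ (0 : ℝ), ∀ s ∈ Icc (0 : ℝ) m,
      ρt t s + R (P t) * ρs t s = -δ0 * ρ t s)
    (hbc : ∀ t ≥ (0 : ℝ), R (P t) * ρ t 0 = γ * g * Z t * h (P t))
    (hNeq : ∀ t ≥ (0 : ℝ), HasDerivAt N (-μ * P t * f (N t) + lam * P t + δ * Z t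
      + (1 - γ) * g * Z t * h (P t) + ∫ s in (0 : ℝ)..m, δ0 * ρ t s) t)
    (hPeq : ∀ t ≥ (0 : ℝ), HasDerivAt P (μ * P t * f (N t) - lam * P t
      - g * Z t * h (P t)) t)
    (hZeq : ∀ t ≥ (0 : ℝ), HasDerivAt Z (R (P t) * ρ t m - δ * Z t) t)
    (hNT : NT = N 0 + P 0 + Z 0 + ∫ s in (0 : ℝ)..m, ρ 0 s) :
    ∀ t ≥ (0 : ℝ), N t + P t + Z t + (∫ s in (0 : ℝ)..m, ρ t s) = NT := by
  have hIcc : uIcc (0 : ℝ) m = Icc 0 m := uIcc_of_le hm.le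
  have hIoc : uIoc (0 : ℝ) m = Ioc 0 m := uIoc_of_le hm.le
  set G : ℝ → ℝ := fun t => ∫ s in (0 : ℝ)..m, ρ t s with hG
  set W : ℝ → ℝ := fun t => N t + P t + Z t + G t with hW
  -- continuity of `G` on `Ici 0` via an extension of `ρ`
  have projmaps : ∀ p : ℝ × ℝ, (max p.1 0, max (min p.2 m) 0) ∈ Ici (0 : ℝ) ×ˢ Icc 0 m := by
    intro p
    refine ⟨mem_Ici.mpr (le_max_right _ _), mem_Icc.mpr ⟨le_max_right _ _, max_le (min_le_right _ _) hm.le⟩⟩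
  have projcont : Continuous (fun p : ℝ × ℝ => (max p.1 0, max (min p.2 m) 0)) := by
    fun_prop
  have hρ'cont : Continuous (Function.uncurry fun t s => ρ (max t 0) (max (min s m) 0)) := by
    exact hρcont.comp_continuous projcont projmaps
  have hG'cont : Continuous (fun t => ∫ s in (0 : ℝ)..m, ρ (max t 0) (max (min s m) 0)) :=
    continuous_parametric_intervalIntegral_of_continuous' hρ'cont 0 m
  have hGeq : ∀ t ∈ Ici (0 : ℝ),
      G t = ∫ s in (0 : ℝ)..m, ρ (max t 0) (max (min s m) 0) := by
    intro t ht
    refine intervalIntegral.integral_congr fun s hs => ?_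
    rw [hIcc] at hs
    rw [max_eq_left ht, min_eq_left hs.2, max_eq_left hs.1]
  have hGcont : ContinuousOn G (Ici 0) :=
    (hG'cont.continuousOn).congr hGeq
  -- integrability lemmas at a fixed time
  have sliceρ : ∀ t ∈ Ici (0:ℝ), ContinuousOn (fun s => ρ t s) (Icc 0 m) := fun t ht =>
    hρcont.comp ((continuous_const.prodMk continuous_id).continuousOn :
      ContinuousOn (fun s : ℝ => (t, s)) (Icc 0 m)) (fun s hs => ⟨ht, hs⟩)
  have sliceρt : ∀ t ∈ Ici (0:ℝ), ContinuousOn (fun s => ρt t s) (Icc 0 m) := fun t ht =>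
    hρtcont.comp ((continuous_const.prodMk continuous_id).continuousOn :
      ContinuousOn (fun s : ℝ => (t, s)) (Icc 0 m)) (fun s hs => ⟨ht, hs⟩)
  have sliceρs : ∀ t ∈ Ici (0:ℝ), ContinuousOn (fun s => ρs t s) (Icc 0 m) := fun t ht =>
    hρscont.comp ((continuous_const.prodMk continuous_id).continuousOn :
      ContinuousOn (fun s : ℝ => (t, s)) (Icc 0 m)) (fun s hs => ⟨ht, hs⟩)
  have intρ : ∀ t ∈ Ici (0:ℝ), IntervalIntegrable (fun s => ρ t s) volume 0 m := fun t ht =>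
    ((sliceρ t ht).mono (by rw [hIcc])).intervalIntegrable
  have intρt : ∀ t ∈ Ici (0:ℝ), IntervalIntegrable (fun s => ρt t s) volume 0 m := fun t ht =>
    ((sliceρt t ht).mono (by rw [hIcc])).intervalIntegrable
  have intρs : ∀ t ∈ Ici (0:ℝ), IntervalIntegrable (fun s => ρs t s) volume 0 m := fun t ht =>
    ((sliceρs t ht).mono (by rw [hIcc])).intervalIntegrable
  -- derivative of G for t > 0
  have hGderiv : ∀ t > (0 : ℝ), HasDerivAt G (∫ s in (0:ℝ)..m, ρt t s) t := by
    intro t ht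
    have hε : (0:ℝ) < t / 2 := by linarith
    -- bound on ρt over a compact neighborhood
    obtain ⟨C, hC⟩ : ∃ C, ∀ p ∈ Icc (t/2) (t + t/2) ×ˢ Icc (0:ℝ) m,
        ‖ρt p.1 p.2‖ ≤ C := by
      have hK : IsCompact (Icc (t/2) (t + t/2) ×ˢ Icc (0:ℝ) m) :=
        isCompact_Icc.prod isCompact_Icc
      have hsub : (Icc (t/2) (t + t/2) ×ˢ Icc (0:ℝ) m) ⊆ Ici 0 ×ˢ Icc 0 m := by
        intro p hp
        exact ⟨le_trans hε.le hp.1.1, hp.2⟩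
      exact hK.exists_bound_of_continuousOn (hρtcont.mono hsub)
    have hball : ∀ x ∈ Metric.ball t (t/2), x ∈ Icc (t/2) (t + t/2) := by
      intro x hx
      rw [Metric.mem_ball, Real.dist_eq, abs_lt] at hx
      constructor <;> linarith [hx.1, hx.2]
    have := intervalIntegral.hasDerivAt_integral_of_dominated_loc_of_deriv_le
      (F := fun x s => ρ x s) (F' := fun x s => ρt x s) (x₀ := t)
      (bound := fun _ => C) (a := (0:ℝ)) (b := m) (μ := volume) (Metric.ball_mem_nhds t hε)
      (by
        filter_upwards [eventually_gt_nhds ht] with x hx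
        exact ((sliceρ x hx.le).mono (by rw [hIoc]; exact Ioc_subset_Icc_self)).aestronglyMeasurable
          measurableSet_uIoc)
      (intρ t (le_of_lt ht)) ?_ ?_ ?_ ?_
    · exact this.2
    · exact ((sliceρt t ht.le).mono (by rw [hIoc]; exact Ioc_subset_Icc_self)).aestronglyMeasurable
        measurableSet_uIoc
    · refine Filter.Eventually.of_forall fun s hs x hx => ?_
      rw [hIoc] at hs
      exact hC (x, s) ⟨hball x hx, Ioc_subset_Icc_self hs⟩
    · exact intervalIntegrable_const
    · refine Filter.Eventually.of_forall fun s hs x hx => ?_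
      rw [hIoc] at hs
      have hx0 : (0:ℝ) ≤ x := le_trans hε.le (hball x hx).1
      exact (hρderiv x hx0 s (Ioc_subset_Icc_self hs)).1
  -- the total biomass has zero derivative for t > 0
  have hWderiv : ∀ t > (0:ℝ), HasDerivAt W 0 t := by
    intro t ht
    have ht' : (0:ℝ) ≤ t := ht.le
    have hD := (((hNeq t ht').add (hPeq t ht')).add (hZeq t ht')).add (hGderiv t ht)
    have hFTC : (∫ s in (0:ℝ)..m, ρs t s) = ρ t m - ρ t 0 :=
      intervalIntegral.integral_eq_sub_of_hasDerivAt
        (fun s hs => (hρderiv t ht' s (hIcc ▸ hs)).2) (intρs t ht')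
    have hρt_int : (∫ s in (0:ℝ)..m, ρt t s)
        = (-δ0) * (∫ s in (0:ℝ)..m, ρ t s) - R (P t) * (ρ t m - ρ t 0) := by
      rw [← hFTC, ← intervalIntegral.integral_const_mul,
        ← intervalIntegral.integral_const_mul,
        ← intervalIntegral.integral_sub ((intρ t ht').const_mul _)
          ((intρs t ht').const_mul _)]
      refine intervalIntegral.integral_congr fun s hs => ?_
      have := hpde t ht' s (hIcc ▸ hs)
      show ρt t s = -δ0 * ρ t s - R (P t) * ρs t s
      linarith
    have hδ0int : (∫ s in (0:ℝ)..m, δ0 * ρ t s) = δ0 * ∫ s in (0:ℝ)..m, ρ t s :=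
      intervalIntegral.integral_const_mul _ _
    have hval : (-μ * P t * f (N t) + lam * P t + δ * Z t + (1 - γ) * g * Z t * h (P t)
        + ∫ s in (0:ℝ)..m, δ0 * ρ t s)
        + (μ * P t * f (N t) - lam * P t - g * Z t * h (P t))
        + (R (P t) * ρ t m - δ * Z t)
        + (∫ s in (0:ℝ)..m, ρt t s) = 0 := by
      rw [hρt_int, hδ0int]
      linear_combination hbc t ht'
    exact hval ▸ hD
  -- continuity of W on [0, ∞)
  have hWcont : ContinuousOn W (Ici 0) := fun x hx =>
    ((((hNeq x hx).continuousAt.continuousWithinAt.add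
      (hPeq x hx).continuousAt.continuousWithinAt).add
      (hZeq x hx).continuousAt.continuousWithinAt).add (hGcont x hx))
  -- conclude
  intro t ht
  rw [hNT]
  have key : W t = W 0 := by
    rcases eq_or_lt_of_le ht with rfl | htpos
    · rfl
    have hconst : ∀ a, 0 < a → a ≤ t → W t = W a := by
      intro a ha hat
      have hsub : Icc a t ⊆ Ici (0:ℝ) := fun x hx => le_trans ha.le hx.1
      have := constant_of_has_deriv_right_zero (f := W) (hWcont.mono hsub)
        (fun x hx => ((hWderiv x (lt_of_lt_of_le ha hx.1)).hasDerivWithinAt))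
      exact this t (right_mem_Icc.mpr hat)
    have h1 : Tendsto W (𝓝[>] (0:ℝ)) (𝓝 (W 0)) :=
      (hWcont 0 (le_refl (0:ℝ))).tendsto.mono_left (nhdsWithin_mono _ Ioi_subset_Ici_self)
    have h2 : ∀ᶠ a in 𝓝[>] (0:ℝ), W a = W t := by
      filter_upwards [Ioc_mem_nhdsGT_of_mem (left_mem_Ico.mpr htpos)] with a ha
      exact (hconst a ha.1 ha.2).symm
    have h3 : Tendsto W (𝓝[>] (0:ℝ)) (𝓝 (W t)) :=
      Tendsto.congr' (h2.mono fun a ha => ha.symm) tendsto_const_nhds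
    exact (tendsto_nhds_unique h1 h3).symm
  simpa [hW, hG] using key
end
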